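/- Let φ be a non-zero Bernstein function and let 0 < c ≤ d. Then for all a, a' ∈ [c, d] and all b ∈ ℝ, |φ(a' + ib)| ≤ (d/c) · |φ(a + ib)|. More precisely, |φ(a'+ib) - φ(a+ib)| ≤ |a - a'| · φ'(min(a,a')) and |φ(a+ib)| ≥ φ(a), and φ'(x)/φ(x) ≤ 1/x yields the stated bound. -/

import Mathlib

open MeasureTheory Set
lemma norm_one_sub_cexp {w : ℂ} (hw : 0 ≤ w.re) : ‖1 - Complex.exp (-w)‖ ≤ 2 * ‖w‖ := by
  rcases le_or_gt (‖w‖) 1 with h | h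
  · have h2 := Complex.norm_exp_sub_one_le (x := -w) (by simpa using h)
    calc ‖1 - Complex.exp (-w)‖ = ‖Complex.exp (-w) - 1‖ := by
          rw [show (1 - Complex.exp (-w)) = -(Complex.exp (-w) - 1) by ring, norm_neg]
      _ ≤ 2 * ‖-w‖ := h2
      _ = 2 * ‖w‖ := by rw [norm_neg]
  · have h1 : ‖Complex.exp (-w)‖ ≤ 1 := by
      rw [Complex.norm_exp]
      exact Real.exp_le_one_iff.2 (by simpa using hw)
    calc ‖1 - Complex.exp (-w)‖ ≤ ‖(1:ℂ)‖ + ‖Complex.exp (-w)‖ :=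
          norm_sub_le _ _
      _ ≤ 2 := by rw [norm_one]; linarith
      _ ≤ 2 * ‖w‖ := by nlinarith

lemma one_sub_exp_le {s : ℝ} : 1 - Real.exp (-s) ≤ s := by
  have := Real.add_one_le_exp (-s)
  linarith

lemma one_sub_exp_nonneg {s : ℝ} (hs : 0 ≤ s) : 0 ≤ 1 - Real.exp (-s) := by
  have : Real.exp (-s) ≤ 1 := Real.exp_le_one_iff.2 (by linarith)
  linarith

lemma mul_exp_le {t : ℝ} (ht : 0 ≤ t) : t * Real.exp (-t) ≤ 1 - Real.exp (-t) := by
  have h := Real.add_one_le_exp t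
  have h2 : Real.exp (-t) * Real.exp t = 1 := by rw [← Real.exp_add]; simp
  nlinarith [Real.exp_pos (-t), Real.exp_pos t]

lemma exp_diff_le_aux {a a' y : ℝ} (hy : 0 ≤ y) (h : a ≤ a') :
    |Real.exp (-(a*y)) - Real.exp (-(a'*y))| ≤ (a' - a) * (Real.exp (-(a * y)) * y) := by
  have h1 : Real.exp (-(a'*y)) ≤ Real.exp (-(a*y)) := Real.exp_le_exp.2 (by nlinarith)
  rw [abs_of_nonneg (by linarith)]
  have key : Real.exp (-(a'*y)) = Real.exp (-(a*y)) * Real.exp (-((a'-a)*y)) := by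
    rw [← Real.exp_add]; ring_nf
  rw [key]
  have h2 : 1 - Real.exp (-((a'-a)*y)) ≤ (a'-a)*y := one_sub_exp_le
  nlinarith [Real.exp_pos (-(a*y))]

lemma exp_diff_le {a a' y : ℝ} (hy : 0 ≤ y) :
    |Real.exp (-(a*y)) - Real.exp (-(a'*y))| ≤ |a - a'| * (Real.exp (-(min a a' * y)) * y) := by
  rcases le_total a a' with h | h
  · rw [min_eq_left h, show |a - a'| = a' - a by rw [abs_sub_comm]; exact abs_of_nonneg (by linarith)]
    exact exp_diff_le_aux hy h
  · rw [min_eq_right h, show |a - a'| = a - a' from abs_of_nonneg (by linarith), abs_sub_comm]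
    exact exp_diff_le_aux hy h

lemma cexp_factor (a b y : ℝ) :
    Complex.exp (-((↑a + ↑b*Complex.I) * ↑y))
      = (Real.exp (-(a*y)) : ℂ) * Complex.exp (↑(-(b*y)) * Complex.I) := by
  rw [Complex.ofReal_exp, ← Complex.exp_add]
  congr 1
  push_cast
  ring

lemma norm_cexp_diff (a a' b y : ℝ) :
    ‖Complex.exp (-((↑a + ↑b*Complex.I) * ↑y)) - Complex.exp (-((↑a' + ↑b*Complex.I) * ↑y))‖
      = |Real.exp (-(a*y)) - Real.exp (-(a'*y))| := by
  rw [cexp_factor, cexp_factor, ← sub_mul, norm_mul]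
  have h1 : ‖Complex.exp (↑(-(b*y)) * Complex.I)‖ = 1 := by
    rw [Complex.norm_exp]; simp
  rw [h1, mul_one, ← Complex.ofReal_sub, Complex.norm_real, Real.norm_eq_abs]

lemma integrable_of_min_bound {μ : Measure ℝ}
    (hμ : ∫⁻ y in Set.Ioi (0:ℝ), ENNReal.ofReal (min y 1) ∂μ ≠ ⊤)
    {E : Type*} [NormedAddCommGroup E] {f : ℝ → E}
    (hf : AEStronglyMeasurable f (μ.restrict (Ioi 0)))
    {K : ℝ} (hK : 0 ≤ K) (hb : ∀ y ∈ Ioi (0:ℝ), ‖f y‖ ≤ K * min y 1) :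
    Integrable f (μ.restrict (Ioi 0)) := by
  have hgm : AEStronglyMeasurable (fun y : ℝ => K * min y 1) (μ.restrict (Ioi 0)) :=
    (continuous_const.mul (continuous_id.min continuous_const)).aestronglyMeasurable
  have hg : Integrable (fun y : ℝ => K * min y 1) (μ.restrict (Ioi 0)) := by
    refine ⟨hgm, ?_⟩
    rw [HasFiniteIntegral]
    have heq : ∫⁻ y in Ioi (0:ℝ), ‖K * min y 1‖ₑ ∂μ
        = ∫⁻ y in Ioi (0:ℝ), ENNReal.ofReal K * ENNReal.ofReal (min y 1) ∂μ := by
      refine setLIntegral_congr_fun measurableSet_Ioi (fun y hy => ?_)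
      rw [← ENNReal.ofReal_mul hK]
      exact Real.enorm_eq_ofReal (mul_nonneg hK (le_min (le_of_lt hy) zero_le_one))
    rw [heq, lintegral_const_mul' _ _ ENNReal.ofReal_ne_top]
    exact ENNReal.mul_lt_top ENNReal.ofReal_lt_top hμ.lt_top
  exact hg.mono' hf ((ae_restrict_iff' measurableSet_Ioi).2 (ae_of_all _ hb))

lemma integrable_cexp_kernel {μ : Measure ℝ}
    (hμ : ∫⁻ y in Set.Ioi (0:ℝ), ENNReal.ofReal (min y 1) ∂μ ≠ ⊤)
    {z : ℂ} (hz : 0 < z.re) :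
    Integrable (fun y : ℝ => 1 - Complex.exp (-(z * y))) (μ.restrict (Ioi 0)) := by
  refine integrable_of_min_bound hμ ?_ (K := max (2*‖z‖) 2)
    (le_trans zero_le_two (le_max_right _ _)) ?_
  · exact (Continuous.sub continuous_const (Complex.continuous_exp.comp
      (continuous_const.mul Complex.continuous_ofReal).neg)).aestronglyMeasurable
  · intro y hy
    have hy0 : (0:ℝ) < y := hy
    have hre : 0 ≤ (z * ↑y).re := by
      simp only [Complex.mul_re, Complex.ofReal_re, Complex.ofReal_im, mul_zero, sub_zero]
      positivity
    rcases le_total y 1 with h1 | h1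
    · have hb := norm_one_sub_cexp (w := z * ↑y) hre
      have habs : ‖z * ↑y‖ = ‖z‖ * y := by
        rw [norm_mul, Complex.norm_real, Real.norm_eq_abs, abs_of_pos hy0]
      rw [min_eq_left h1]
      calc ‖1 - Complex.exp (-(z * ↑y))‖ ≤ 2 * (‖z‖ * y) := by
            rw [← habs]; exact hb
        _ = 2 * ‖z‖ * y := by ring
        _ ≤ max (2*‖z‖) 2 * y := by
            have := le_max_left (2*‖z‖) 2
            nlinarith
    · have hle : ‖Complex.exp (-(z * ↑y))‖ ≤ 1 := by
        rw [Complex.norm_exp]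
        exact Real.exp_le_one_iff.2 (by simpa using hre)
      rw [min_eq_right h1, mul_one]
      calc ‖1 - Complex.exp (-(z * ↑y))‖
          ≤ ‖(1:ℂ)‖ + ‖Complex.exp (-(z * ↑y))‖ := norm_sub_le _ _
        _ ≤ 2 := by rw [norm_one]; linarith
        _ ≤ max (2*‖z‖) 2 := le_max_right _ _

lemma integrable_exp_mul {μ : Measure ℝ}
    (hμ : ∫⁻ y in Set.Ioi (0:ℝ), ENNReal.ofReal (min y 1) ∂μ ≠ ⊤)
    {m : ℝ} (hm : 0 < m) :
    Integrable (fun y : ℝ => Real.exp (-(m*y)) * y) (μ.restrict (Ioi 0)) := by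
  refine integrable_of_min_bound hμ ?_ (K := max 1 (1/m))
    (le_trans zero_le_one (le_max_left _ _)) ?_
  · exact ((Real.continuous_exp.comp (continuous_const.mul continuous_id).neg).mul
      continuous_id).aestronglyMeasurable
  · intro y hy
    have hy0 : (0:ℝ) < y := hy
    have hexp : Real.exp (-(m*y)) ≤ 1 := Real.exp_le_one_iff.2 (by nlinarith)
    have hnn : 0 ≤ Real.exp (-(m*y)) * y := by positivity
    rw [Real.norm_eq_abs, abs_of_nonneg hnn]
    rcases le_total y 1 with h1 | h1
    · rw [min_eq_left h1]
      have h2 : Real.exp (-(m*y)) * y ≤ y := by nlinarith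
      have h3 : y ≤ max 1 (1/m) * y := by nlinarith [le_max_left 1 (1/m)]
      linarith
    · rw [min_eq_right h1, mul_one]
      have key : (m*y) * Real.exp (-(m*y)) ≤ 1 := by
        have := mul_exp_le (t := m*y) (by positivity)
        have := one_sub_exp_nonneg (s := m*y) (by positivity)
        have := Real.exp_nonneg (-(m*y))
        linarith
      have h2 : Real.exp (-(m*y)) * y ≤ 1/m := by
        rw [le_div_iff₀ hm]; nlinarith
      exact le_trans h2 (le_max_right _ _)

lemma integrable_one_sub_exp {μ : Measure ℝ}
    (hμ : ∫⁻ y in Set.Ioi (0:ℝ), ENNReal.ofReal (min y 1) ∂μ ≠ ⊤)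
    {m : ℝ} (hm : 0 < m) :
    Integrable (fun y : ℝ => 1 - Real.exp (-(m*y))) (μ.restrict (Ioi 0)) := by
  refine integrable_of_min_bound hμ ?_ (K := max m 1)
    (le_trans zero_le_one (le_max_right _ _)) ?_
  · exact (continuous_const.sub (Real.continuous_exp.comp
      (continuous_const.mul continuous_id).neg)).aestronglyMeasurable
  · intro y hy
    have hy0 : (0:ℝ) < y := hy
    have hnn : 0 ≤ 1 - Real.exp (-(m*y)) := one_sub_exp_nonneg (by positivity)
    rw [Real.norm_eq_abs, abs_of_nonneg hnn]
    rcases le_total y 1 with h1 | h1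
    · rw [min_eq_left h1]
      have h2 : 1 - Real.exp (-(m*y)) ≤ m * y := one_sub_exp_le
      nlinarith [le_max_left m 1]
    · rw [min_eq_right h1, mul_one]
      have : Real.exp (-(m*y)) ≥ 0 := Real.exp_nonneg _
      nlinarith [le_max_right m 1]


/-- Uniform comparison of a non-zero Bernstein function along vertical lines with
real parts in a compact interval `[c, d] ⊂ (0, ∞)`. -/
theorem bernstein_uniform_ratio
    (c₀ d₀ : ℝ) (hc₀ : 0 ≤ c₀) (hd₀ : 0 ≤ d₀)
    (μ : Measure ℝ)
    (hμ : ∫⁻ y in Set.Ioi (0:ℝ), ENNReal.ofReal (min y 1) ∂μ ≠ ⊤)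
    (φ : ℂ → ℂ)
    (hφ : ∀ z : ℂ, 0 < z.re →
      φ z = (c₀ : ℂ) + (d₀ : ℂ) * z +
        ∫ y in Set.Ioi (0:ℝ), (1 - Complex.exp (-(z * (y : ℂ)))) ∂μ)
    (hne : ¬(c₀ = 0 ∧ d₀ = 0 ∧ μ (Set.Ioi 0) = 0))
    (c d : ℝ) (hc : 0 < c) (hcd : c ≤ d) :
    ∀ a ∈ Set.Icc c d, ∀ a' ∈ Set.Icc c d, ∀ b : ℝ,
      ‖φ ((a' : ℂ) + (b : ℂ) * Complex.I) -
          φ ((a : ℂ) + (b : ℂ) * Complex.I)‖ ≤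
        |a - a'| * (d₀ + ∫ y in Set.Ioi (0:ℝ),
          Real.exp (-(min a a' * y)) * y ∂μ) ∧
      (φ ((a : ℝ) : ℂ)).re ≤ ‖φ ((a : ℂ) + (b : ℂ) * Complex.I)‖ ∧
      ‖φ ((a' : ℂ) + (b : ℂ) * Complex.I)‖ ≤
        (d / c) * ‖φ ((a : ℂ) + (b : ℂ) * Complex.I)‖ := by
  intro a ha a' ha' b
  have ha0 : 0 < a := lt_of_lt_of_le hc ha.1
  have ha'0 : 0 < a' := lt_of_lt_of_le hc ha'.1
  set m : ℝ := min a a' with hm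
  have hm0 : 0 < m := lt_min ha0 ha'0
  have hcm : c ≤ m := le_min ha.1 ha'.1
  set z : ℂ := (a : ℂ) + (b : ℂ) * Complex.I with hz
  set z' : ℂ := (a' : ℂ) + (b : ℂ) * Complex.I with hz'
  have hzre : z.re = a := by simp [hz]
  have hz're : z'.re = a' := by simp [hz']
  -- integrabilities
  have hIz : Integrable (fun y : ℝ => 1 - Complex.exp (-(z * y))) (μ.restrict (Ioi 0)) :=
    integrable_cexp_kernel hμ (by rw [hzre]; exact ha0)
  have hIz' : Integrable (fun y : ℝ => 1 - Complex.exp (-(z' * y))) (μ.restrict (Ioi 0)) :=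
    integrable_cexp_kernel hμ (by rw [hz're]; exact ha'0)
  have hIm : Integrable (fun y : ℝ => Real.exp (-(m*y)) * y) (μ.restrict (Ioi 0)) :=
    integrable_exp_mul hμ hm0
  -- real-part formula for φ on positive reals
  have hre : ∀ x : ℝ, 0 < x →
      (φ (x:ℂ)).re = c₀ + d₀*x + ∫ y in Ioi (0:ℝ), (1 - Real.exp (-(x*y))) ∂μ := by
    intro x hx
    have hIx : Integrable (fun y : ℝ => 1 - Complex.exp (-((x:ℂ) * y))) (μ.restrict (Ioi 0)) :=
      integrable_cexp_kernel hμ (by simpa using hx)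
    rw [hφ x (by simpa using hx)]
    have h1 : ((∫ y in Ioi (0:ℝ), (1 - Complex.exp (-((x:ℂ) * y))) ∂μ)).re
        = ∫ y in Ioi (0:ℝ), (1 - Real.exp (-(x*y))) ∂μ := by
      have h2 := integral_re hIx
      simp only [RCLike.re_to_complex] at h2
      rw [← h2]
      congr 1
      funext y
      have : -((x:ℂ) * y) = ((-(x*y) : ℝ) : ℂ) := by push_cast; ring
      rw [this, ← Complex.ofReal_exp, Complex.sub_re, Complex.one_re, Complex.ofReal_re]
    simp only [Complex.add_re, Complex.ofReal_re, h1]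
    have : ((d₀:ℂ) * x).re = d₀ * x := by
      rw [← Complex.ofReal_mul]; exact Complex.ofReal_re _
    rw [this]
  -- difference formula and Part 1
  have hdiff : φ z' - φ z = (d₀:ℂ) * ((a':ℝ) - a : ℝ)
      + ∫ y in Ioi (0:ℝ), (Complex.exp (-(z * y)) - Complex.exp (-(z' * y))) ∂μ := by
    have hsub : (∫ y in Ioi (0:ℝ), (1 - Complex.exp (-(z' * y))) ∂μ)
        - ∫ y in Ioi (0:ℝ), (1 - Complex.exp (-(z * y))) ∂μ
        = ∫ y in Ioi (0:ℝ), (Complex.exp (-(z * y)) - Complex.exp (-(z' * y))) ∂μ := by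
      rw [← integral_sub hIz' hIz]; congr 1; funext y; ring
    have hzz : z' - z = ((a' - a : ℝ) : ℂ) := by rw [hz', hz]; push_cast; ring
    rw [hφ z' (by rw [hz're]; exact ha'0), hφ z (by rw [hzre]; exact ha0), ← hsub, ← hzz]
    ring
  have hInonneg : 0 ≤ ∫ y in Ioi (0:ℝ), Real.exp (-(m*y)) * y ∂μ :=
    setIntegral_nonneg measurableSet_Ioi (fun y hy => by
      have : (0:ℝ) < y := hy
      positivity)
  have part1 : ‖φ z' - φ z‖
      ≤ |a - a'| * (d₀ + ∫ y in Ioi (0:ℝ), Real.exp (-(m*y)) * y ∂μ) := by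
    rw [hdiff]
    have hnorm : ‖∫ y in Ioi (0:ℝ), (Complex.exp (-(z * y)) - Complex.exp (-(z' * y))) ∂μ‖
        ≤ ∫ y in Ioi (0:ℝ), |a - a'| * (Real.exp (-(m*y)) * y) ∂μ := by
      refine norm_integral_le_of_norm_le (hIm.const_mul _)
        (((ae_restrict_iff' measurableSet_Ioi).2 (ae_of_all _ fun y hy => ?_)))
      have hy0 : (0:ℝ) ≤ y := le_of_lt hy
      have e1 : ‖Complex.exp (-(z * y)) - Complex.exp (-(z' * y))‖
          = |Real.exp (-(a*y)) - Real.exp (-(a'*y))| := norm_cexp_diff a a' b y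
      rw [e1]
      exact exp_diff_le hy0
    calc ‖(d₀:ℂ) * ((a':ℝ) - a : ℝ)
          + ∫ y in Ioi (0:ℝ), (Complex.exp (-(z * y)) - Complex.exp (-(z' * y))) ∂μ‖
        ≤ ‖(d₀:ℂ) * ((a':ℝ) - a : ℝ)‖
          + ‖∫ y in Ioi (0:ℝ), (Complex.exp (-(z * y)) - Complex.exp (-(z' * y))) ∂μ‖ :=
          norm_add_le _ _
      _ ≤ d₀ * |a - a'| + ∫ y in Ioi (0:ℝ), |a - a'| * (Real.exp (-(m*y)) * y) ∂μ := by
          refine add_le_add ?_ hnorm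
          rw [norm_mul, Complex.norm_real, Complex.norm_real, Real.norm_eq_abs, Real.norm_eq_abs, abs_of_nonneg hd₀, abs_sub_comm]
      _ = |a - a'| * (d₀ + ∫ y in Ioi (0:ℝ), Real.exp (-(m*y)) * y ∂μ) := by
          rw [integral_const_mul]
          ring
  -- Part 2
  have part2 : ∀ x : ℝ, 0 < x → ∀ bb : ℝ,
      (φ (x:ℂ)).re ≤ ‖φ ((x:ℂ) + (bb:ℂ) * Complex.I)‖ := by
    intro x hx bb
    set w : ℂ := (x:ℂ) + (bb:ℂ) * Complex.I with hw
    have hwre : w.re = x := by simp [hw]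
    have hIw : Integrable (fun y : ℝ => 1 - Complex.exp (-(w * y))) (μ.restrict (Ioi 0)) :=
      integrable_cexp_kernel hμ (by rw [hwre]; exact hx)
    have hIwre : Integrable (fun y : ℝ => 1 - Real.exp (-(x*y)) * Real.cos (bb*y))
        (μ.restrict (Ioi 0)) := by
      have h := hIw.re
      simp only [RCLike.re_to_complex] at h
      have heq : (fun y : ℝ => (1 - Complex.exp (-(w * y))).re)
          = fun y : ℝ => 1 - Real.exp (-(x*y)) * Real.cos (bb*y) := by
        funext y
        simp only [Complex.sub_re, Complex.one_re, Complex.exp_re]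
        have h1 : (-(w * y)).re = -(x*y) := by simp [hw, Complex.mul_re]
        have h2 : (-(w * y)).im = -(bb*y) := by simp [hw, Complex.mul_im]
        rw [h1, h2, Real.cos_neg]
      rw [heq] at h
      exact h
    have hIx : Integrable (fun y : ℝ => 1 - Real.exp (-(x*y))) (μ.restrict (Ioi 0)) :=
      integrable_one_sub_exp hμ hx
    have hmono : ∫ y in Ioi (0:ℝ), (1 - Real.exp (-(x*y))) ∂μ
        ≤ ∫ y in Ioi (0:ℝ), (1 - Real.exp (-(x*y)) * Real.cos (bb*y)) ∂μ := by
      refine integral_mono hIx hIwre (fun y => ?_)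
      have : Real.exp (-(x*y)) * Real.cos (bb*y) ≤ Real.exp (-(x*y)) :=
        mul_le_of_le_one_right (Real.exp_nonneg _) (Real.cos_le_one _)
      simp only
      linarith
    have hwre2 : (φ w).re = c₀ + d₀*x
        + ∫ y in Ioi (0:ℝ), (1 - Real.exp (-(x*y)) * Real.cos (bb*y)) ∂μ := by
      rw [hφ w (by rw [hwre]; exact hx)]
      have h2 := integral_re hIw
      simp only [RCLike.re_to_complex] at h2
      have heq : (fun y : ℝ => (1 - Complex.exp (-(w * y))).re)
          = fun y : ℝ => 1 - Real.exp (-(x*y)) * Real.cos (bb*y) := by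
        funext y
        simp only [Complex.sub_re, Complex.one_re, Complex.exp_re]
        have h1 : (-(w * y)).re = -(x*y) := by simp [hw, Complex.mul_re]
        have h2 : (-(w * y)).im = -(bb*y) := by simp [hw, Complex.mul_im]
        rw [h1, h2, Real.cos_neg]
      simp only [Complex.add_re, Complex.ofReal_re]
      rw [← heq, h2]
      have : ((d₀:ℂ) * w).re = d₀ * x := by
        simp [hw, Complex.mul_re, Complex.mul_im]
      rw [this]
    have := Complex.re_le_norm (φ w)
    rw [hre x hx]
    rw [hwre2] at this
    linarith
  refine ⟨part1, part2 a ha0 b, ?_⟩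
  -- Part 3
  set I : ℝ := ∫ y in Ioi (0:ℝ), Real.exp (-(m*y)) * y ∂μ with hI
  -- m * (d₀ + I) ≤ (φ m).re
  have hkey : m * (d₀ + I) ≤ (φ (m:ℂ)).re := by
    rw [hre m hm0]
    have hmul : m * I = ∫ y in Ioi (0:ℝ), m * (Real.exp (-(m*y)) * y) ∂μ := by
      rw [integral_const_mul]
    have hle : ∫ y in Ioi (0:ℝ), m * (Real.exp (-(m*y)) * y) ∂μ
        ≤ ∫ y in Ioi (0:ℝ), (1 - Real.exp (-(m*y))) ∂μ := by
      refine setIntegral_mono_on (hIm.const_mul m) (integrable_one_sub_exp hμ hm0)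
        measurableSet_Ioi (fun y hy => ?_)
      have hy0 : (0:ℝ) ≤ y := le_of_lt hy
      have := mul_exp_le (t := m*y) (by positivity)
      calc m * (Real.exp (-(m*y)) * y) = (m*y) * Real.exp (-(m*y)) := by ring
        _ ≤ 1 - Real.exp (-(m*y)) := this
    nlinarith
  -- monotonicity : (φ m).re ≤ (φ a).re
  have hmono2 : (φ (m:ℂ)).re ≤ (φ (a:ℂ)).re := by
    rw [hre m hm0, hre a ha0]
    have hma : m ≤ a := min_le_left _ _
    have hle : ∫ y in Ioi (0:ℝ), (1 - Real.exp (-(m*y))) ∂μ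
        ≤ ∫ y in Ioi (0:ℝ), (1 - Real.exp (-(a*y))) ∂μ := by
      refine setIntegral_mono_on (integrable_one_sub_exp hμ hm0)
        (integrable_one_sub_exp hμ ha0) measurableSet_Ioi (fun y hy => ?_)
      have hy0 : (0:ℝ) ≤ y := le_of_lt hy
      have : Real.exp (-(a*y)) ≤ Real.exp (-(m*y)) := Real.exp_le_exp.2 (by nlinarith)
      linarith
    nlinarith
  have hA : (φ (a:ℂ)).re ≤ ‖φ z‖ := part2 a ha0 b
  have htri : ‖φ z'‖ ≤ ‖φ z‖ + ‖φ z' - φ z‖ := by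
    have := norm_add_le (φ z) (φ z' - φ z)
    simpa using this
  have habs : |a - a'| ≤ d - c := by
    rw [abs_sub_le_iff]
    constructor <;> [linarith [ha.2, ha'.1]; linarith [ha'.2, ha.1]]
  have hdI : 0 ≤ d₀ + I := by linarith
  have hcdI : c * (d₀ + I) ≤ ‖φ z‖ := by
    have : c * (d₀ + I) ≤ m * (d₀ + I) := by nlinarith
    linarith
  have hfin : ‖φ z'‖ ≤ ‖φ z‖ + (d - c) * (d₀ + I) := by
    have h1 : ‖φ z' - φ z‖ ≤ (d - c) * (d₀ + I) := by
      refine le_trans part1 ?_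
      nlinarith
    linarith
  rw [div_mul_eq_mul_div, le_div_iff₀ hc]
  have hAnn : 0 ≤ ‖φ z‖ := norm_nonneg _
  nlinarith
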